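/- (Product estimate.) Let s ∈ (1/2,1] and σ ∈ (1/s,2). There exists a constant C > 0 depending only on s and σ such that for every f : ℤ² → ℂ with f(0) = 0, (∑_{k ∈ ℤ², k ≠ 0} |k|^{2(σ−1)s} |∑_{j ∈ ℤ², j ≠ 0, j ≠ k} ((j^⊥·k)/|j|) f(j) f(k−j)|²)^{1/2} ≤ C (∑_{j ≠ 0} |j|^{2σs}|f(j)|²)^{1/2} (∑_{j ≠ 0} |j|^{2(σ+1)s}|f(j)|²)^{1/2}. This is the Fourier-side form of the estimate ‖R^⊥ f · ∇f‖_{Ḣ^{(σ−1)s}(𝕋²)} ≲ ‖f‖_{Ḣ^{σs}} ‖f‖_{Ḣ^{(σ+1)s}} for mean-zero f on 𝕋², where R^⊥ = (−R₂, R₁) is the perpendicular vector of Riesz transforms. -/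

import Mathlib

open scoped ENNReal NNReal
open MeasureTheory

noncomputable section

/-- Euclidean norm of a lattice point `k ∈ ℤ² ⊆ ℝ²`. -/
def znorm (k : ℤ × ℤ) : ℝ := Real.sqrt ((k.1 : ℝ) ^ 2 + (k.2 : ℝ) ^ 2)

/-- `j^⊥ · k` where `j^⊥ = (−j₂, j₁)`. -/
def perpDot (j k : ℤ × ℤ) : ℝ := (-(j.2 : ℝ)) * (k.1 : ℝ) + (j.1 : ℝ) * (k.2 : ℝ)

/-- Gevrey norm `‖a‖_{ρ,φ} = (∑_{k≠0} |k|^{2ρ} e^{2φ|k|^s} |a k|²)^{1/2}`, valued in `ℝ≥0∞`. -/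
def gnorm (s ρ φ : ℝ) (a : ℤ × ℤ → ℂ) : ℝ≥0∞ :=
  (∑' k : ℤ × ℤ, if k = 0 then 0 else
    ENNReal.ofReal (znorm k ^ (2 * ρ) * Real.exp (2 * φ * znorm k ^ s) * ‖a k‖ ^ 2)) ^ (1/2 : ℝ)

/- ### Auxiliary lemmas -/

lemma znorm_nonneg (k : ℤ × ℤ) : 0 ≤ znorm k := Real.sqrt_nonneg _

lemma one_le_znorm {k : ℤ × ℤ} (hk : k ≠ 0) : 1 ≤ znorm k := by
  have h : k.1 ≠ 0 ∨ k.2 ≠ 0 := by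
    by_contra h
    push_neg at h
    exact hk (Prod.ext h.1 h.2)
  have h1 : (1 : ℝ) ≤ (k.1 : ℝ) ^ 2 + (k.2 : ℝ) ^ 2 := by
    rcases h with h | h
    · have : (1 : ℤ) ≤ k.1 ^ 2 := by
        rcases lt_or_gt_of_ne h with h' | h' <;> nlinarith
      have : (1 : ℝ) ≤ (k.1 : ℝ) ^ 2 := by exact_mod_cast this
      nlinarith [sq_nonneg ((k.2 : ℝ))]
    · have : (1 : ℤ) ≤ k.2 ^ 2 := by
        rcases lt_or_gt_of_ne h with h' | h' <;> nlinarith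
      have : (1 : ℝ) ≤ (k.2 : ℝ) ^ 2 := by exact_mod_cast this
      nlinarith [sq_nonneg ((k.1 : ℝ))]
  calc (1 : ℝ) = Real.sqrt 1 := by rw [Real.sqrt_one]
    _ ≤ znorm k := Real.sqrt_le_sqrt h1

lemma znorm_pos {k : ℤ × ℤ} (hk : k ≠ 0) : 0 < znorm k :=
  lt_of_lt_of_le one_pos (one_le_znorm hk)

lemma znorm_eq_cabs (m : ℤ × ℤ) : znorm m = ‖(⟨(m.1 : ℝ), (m.2 : ℝ)⟩ : ℂ)‖ := by
  rw [Complex.norm_def, Complex.normSq_mk, znorm]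
  congr 1
  ring

lemma znorm_triangle (j k : ℤ × ℤ) : znorm k ≤ znorm j + znorm (k - j) := by
  rw [znorm_eq_cabs, znorm_eq_cabs, znorm_eq_cabs]
  have h : (⟨(k.1 : ℝ), (k.2 : ℝ)⟩ : ℂ) =
      (⟨(j.1 : ℝ), (j.2 : ℝ)⟩ : ℂ) + (⟨(((k - j).1 : ℤ) : ℝ), (((k - j).2 : ℤ) : ℝ)⟩ : ℂ) := by
    have h1 : (k - j).1 = k.1 - j.1 := rfl
    have h2 : (k - j).2 = k.2 - j.2 := rfl
    rw [h1, h2]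
    apply Complex.ext <;> simp [Complex.add_re, Complex.add_im]
  rw [h]
  exact norm_add_le _ _

lemma perpDot_le (j k : ℤ × ℤ) : |perpDot j k| ≤ znorm j * znorm k := by
  rw [← Real.sqrt_sq_eq_abs, znorm, znorm, ← Real.sqrt_mul (by positivity)]
  apply Real.sqrt_le_sqrt
  unfold perpDot
  nlinarith [sq_nonneg ((j.1 : ℝ) * (k.1 : ℝ) + (j.2 : ℝ) * (k.2 : ℝ))]

lemma rpow_add_le {x y ρ : ℝ} (hx : 0 ≤ x) (hy : 0 ≤ y) (hρ : 0 ≤ ρ) :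
    (x + y) ^ ρ ≤ 2 ^ ρ * (x ^ ρ + y ^ ρ) := by
  have hmax : x + y ≤ 2 * max x y := by
    rcases le_total x y with h | h
    · rw [max_eq_right h]; linarith
    · rw [max_eq_left h]; linarith
  calc (x + y) ^ ρ ≤ (2 * max x y) ^ ρ := Real.rpow_le_rpow (by positivity) hmax hρ
    _ = 2 ^ ρ * (max x y) ^ ρ := Real.mul_rpow (by norm_num) (le_max_iff.mpr (Or.inl hx))
    _ ≤ 2 ^ ρ * (x ^ ρ + y ^ ρ) := by
        apply mul_le_mul_of_nonneg_left _ (by positivity)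
        rcases max_cases x y with ⟨h, _⟩ | ⟨h, _⟩ <;> rw [h]
        · exact le_add_of_nonneg_right (Real.rpow_nonneg hy ρ)
        · exact le_add_of_nonneg_left (Real.rpow_nonneg hx ρ)

lemma rpow_two_eq {x : ℝ} (hx : 0 ≤ x) (ρ : ℝ) : x ^ (2 * ρ) = (x ^ ρ) ^ 2 := by
  rw [← Real.rpow_natCast (x ^ ρ) 2, ← Real.rpow_mul hx]
  norm_num
  ring_nf

lemma enn_sq_half (x : ℝ≥0∞) : (x ^ (1 / 2 : ℝ)) ^ 2 = x := by
  rw [← ENNReal.rpow_natCast (x ^ (1 / 2 : ℝ)) 2, ← ENNReal.rpow_mul]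
  norm_num

lemma enn_half_sq (x : ℝ≥0∞) : (x ^ 2) ^ (1 / 2 : ℝ) = x := by
  rw [← ENNReal.rpow_natCast x 2, ← ENNReal.rpow_mul]
  norm_num

lemma enn_sq_le_sq {a b : ℝ≥0∞} (h : a ≤ b) : a ^ 2 ≤ b ^ 2 := by
  simpa [pow_two] using mul_le_mul' h h

lemma ennreal_cauchy_schwarz {ι : Type*} [Countable ι] [MeasurableSpace ι]
    [MeasurableSingletonClass ι] (x y : ι → ℝ≥0∞) :
    ∑' i, x i * y i ≤ (∑' i, x i ^ 2) ^ (1 / 2 : ℝ) * (∑' i, y i ^ 2) ^ (1 / 2 : ℝ) := by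
  have h22 : (2 : ℝ).HolderConjugate 2 := Real.HolderConjugate.two_two
  have := ENNReal.lintegral_mul_le_Lp_mul_Lq (Measure.count : Measure ι) h22
    (measurable_of_countable x).aemeasurable (measurable_of_countable y).aemeasurable
  simp only [Pi.mul_apply, lintegral_count] at this
  calc ∑' i, x i * y i
      ≤ (∑' i, x i ^ (2 : ℝ)) ^ (1 / 2 : ℝ) * (∑' i, y i ^ (2 : ℝ)) ^ (1 / 2 : ℝ) := this
    _ = (∑' i, x i ^ 2) ^ (1 / 2 : ℝ) * (∑' i, y i ^ 2) ^ (1 / 2 : ℝ) := by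
        congr 1 <;> congr 1 <;> apply tsum_congr <;> intro i <;>
          rw [show (2 : ℝ) = ((2 : ℕ) : ℝ) by norm_num, ENNReal.rpow_natCast]

lemma ofReal_norm_tsum_le {ι : Type*} (g : ι → ℂ) :
    ENNReal.ofReal ‖∑' i, g i‖ ≤ ∑' i, ENNReal.ofReal ‖g i‖ := by
  by_cases h : Summable fun i => ‖g i‖
  · calc ENNReal.ofReal ‖∑' i, g i‖ ≤ ENNReal.ofReal (∑' i, ‖g i‖) :=
        ENNReal.ofReal_le_ofReal (norm_tsum_le_tsum_norm h)
      _ = ∑' i, ENNReal.ofReal ‖g i‖ :=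
        ENNReal.ofReal_tsum_of_nonneg (fun _ => norm_nonneg _) h
  · have : ∑' i, ENNReal.ofReal ‖g i‖ = ⊤ := by
      by_contra htop
      apply h
      have heq : ∀ i, ENNReal.ofReal ‖g i‖ = ((‖g i‖₊ : ℝ≥0) : ℝ≥0∞) := fun i => by
        exact ENNReal.ofReal_eq_coe_nnreal _
      rw [tsum_congr heq] at htop
      have := ENNReal.tsum_coe_ne_top_iff_summable.mp htop
      exact (NNReal.summable_coe.mpr this).congr (fun i => by simp [coe_nnnorm])
    rw [this]
    exact le_top

lemma conv_l2 (a N : ℤ × ℤ → ℝ≥0∞) :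
    ∑' k : ℤ × ℤ, (∑' j : ℤ × ℤ, a j * N (k - j)) ^ 2 ≤
      (∑' j : ℤ × ℤ, N j) ^ 2 * ∑' j : ℤ × ℤ, (a j) ^ 2 := by
  set L1 := ∑' j : ℤ × ℤ, N j with hL1
  have key : ∀ k : ℤ × ℤ, (∑' j : ℤ × ℤ, a j * N (k - j)) ^ 2 ≤
      (∑' j : ℤ × ℤ, (a j) ^ 2 * N (k - j)) * L1 := by
    intro k
    have hc : ∑' j : ℤ × ℤ, a j * N (k - j) =
        ∑' j : ℤ × ℤ, (a j * (N (k - j)) ^ (1 / 2 : ℝ)) * ((N (k - j)) ^ (1 / 2 : ℝ)) := by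
      apply tsum_congr; intro j
      conv_lhs => rw [← enn_sq_half (N (k - j))]
      rw [pow_two, ← mul_assoc]
    rw [hc]
    have hcs := ennreal_cauchy_schwarz (fun j : ℤ × ℤ => a j * (N (k - j)) ^ (1 / 2 : ℝ))
      (fun j : ℤ × ℤ => (N (k - j)) ^ (1 / 2 : ℝ))
    calc (∑' j : ℤ × ℤ, (a j * (N (k - j)) ^ (1 / 2 : ℝ)) * ((N (k - j)) ^ (1 / 2 : ℝ))) ^ 2
        ≤ ((∑' j : ℤ × ℤ, (a j * (N (k - j)) ^ (1 / 2 : ℝ)) ^ 2) ^ (1 / 2 : ℝ) *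
           (∑' j : ℤ × ℤ, ((N (k - j)) ^ (1 / 2 : ℝ)) ^ 2) ^ (1 / 2 : ℝ)) ^ 2 :=
          enn_sq_le_sq hcs
      _ = (∑' j : ℤ × ℤ, (a j) ^ 2 * N (k - j)) * (∑' j : ℤ × ℤ, N (k - j)) := by
          rw [mul_pow, enn_sq_half, enn_sq_half]
          congr 1
          · apply tsum_congr; intro j; rw [mul_pow, enn_sq_half]
          · apply tsum_congr; intro j; rw [enn_sq_half]
      _ = (∑' j : ℤ × ℤ, (a j) ^ 2 * N (k - j)) * L1 := by
          congr 1
          have := (Equiv.subLeft k).tsum_eq N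
          simpa [Equiv.subLeft_apply] using this
  calc ∑' k : ℤ × ℤ, (∑' j : ℤ × ℤ, a j * N (k - j)) ^ 2
      ≤ ∑' k : ℤ × ℤ, (∑' j : ℤ × ℤ, (a j) ^ 2 * N (k - j)) * L1 := ENNReal.tsum_le_tsum key
    _ = (∑' k : ℤ × ℤ, ∑' j : ℤ × ℤ, (a j) ^ 2 * N (k - j)) * L1 := ENNReal.tsum_mul_right
    _ = (∑' j : ℤ × ℤ, ∑' k : ℤ × ℤ, (a j) ^ 2 * N (k - j)) * L1 := by rw [ENNReal.tsum_comm]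
    _ = (∑' j : ℤ × ℤ, (a j) ^ 2 * L1) * L1 := by
        congr 1
        apply tsum_congr; intro j
        rw [ENNReal.tsum_mul_left]
        congr 1
        have := (Equiv.addRight j).tsum_eq (fun k : ℤ × ℤ => N (k - j))
        simp only [Equiv.coe_addRight, add_sub_cancel_right] at this
        rw [← this]
    _ = L1 ^ 2 * ∑' j : ℤ × ℤ, (a j) ^ 2 := by
        rw [ENNReal.tsum_mul_right]; ring

lemma step_K {t : ℝ} (ht : 1 < t) :
    (∑' j : ℤ × ℤ, (if j = 0 then 0 else ENNReal.ofReal (znorm j ^ (-t))) ^ 2) ≠ ⊤ := by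
  set g : ℤ → ℝ := fun n => (1 + (n : ℝ) ^ 2) ^ (-(t / 2)) with hg
  have hg_nonneg : ∀ n : ℤ, 0 ≤ g n := fun n => Real.rpow_nonneg (by positivity) _
  have hg_summable : Summable g := by
    have hmaj : Summable (fun n : ℤ => |(n : ℝ)| ^ (-t) + (if n = 0 then (1 : ℝ) else 0)) :=
      (Real.summable_abs_int_rpow ht).add (summable_of_ne_finset_zero (s := {(0 : ℤ)})
        (fun n hn => by simp only [Finset.mem_singleton] at hn; simp [hn]))
    apply Summable.of_nonneg_of_le hg_nonneg _ hmaj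
    intro n
    by_cases hn : n = 0
    · simp [hn, hg, Real.zero_rpow (by linarith : -t ≠ 0), Real.one_rpow]
    · have hn' : ((n : ℝ)) ≠ 0 := Int.cast_ne_zero.mpr hn
      have hpos : (0 : ℝ) < (n : ℝ) ^ 2 := by positivity
      have h1 : ((n : ℝ) ^ 2) ^ (-(t / 2)) = |(n : ℝ)| ^ (-t) := by
        rw [← sq_abs, ← Real.rpow_natCast |(n : ℝ)| 2, ← Real.rpow_mul (abs_nonneg _)]
        norm_num
        congr 1
        ring
      calc g n ≤ ((n : ℝ) ^ 2) ^ (-(t / 2)) :=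
            Real.rpow_le_rpow_of_nonpos hpos (by linarith) (by linarith)
        _ = |(n : ℝ)| ^ (-t) := h1
        _ ≤ |(n : ℝ)| ^ (-t) + (if n = 0 then (1 : ℝ) else 0) := by
            apply le_add_of_nonneg_right; split <;> norm_num
  set Sg : ℝ≥0∞ := ∑' n : ℤ, ENNReal.ofReal (g n) with hSg
  have hSg_ne_top : Sg ≠ ⊤ := by
    rw [hSg, ← ENNReal.ofReal_tsum_of_nonneg hg_nonneg hg_summable]
    exact ENNReal.ofReal_ne_top
  have hbound : (∑' j : ℤ × ℤ, (if j = 0 then 0 else ENNReal.ofReal (znorm j ^ (-t))) ^ 2) ≤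
      ENNReal.ofReal (2 ^ t) * (Sg * Sg) := by
    have hterm : ∀ j : ℤ × ℤ, (if j = 0 then 0 else ENNReal.ofReal (znorm j ^ (-t))) ^ 2 ≤
        ENNReal.ofReal (2 ^ t) * (ENNReal.ofReal (g j.1) * ENNReal.ofReal (g j.2)) := by
      intro j
      by_cases hj : j = 0
      · simp [hj]
      · rw [if_neg hj]
        set z := znorm j with hz
        have hz1 : 1 ≤ z := one_le_znorm hj
        have hz0 : 0 < z := znorm_pos hj
        set A : ℝ := 1 + (j.1 : ℝ) ^ 2 with hA
        set B : ℝ := 1 + (j.2 : ℝ) ^ 2 with hB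
        have hzsq : z ^ 2 = (j.1 : ℝ) ^ 2 + (j.2 : ℝ) ^ 2 := Real.sq_sqrt (by positivity)
        have hABpos : 0 < A * B := by positivity
        have h1ab : 1 ≤ (j.1 : ℝ) ^ 2 + (j.2 : ℝ) ^ 2 := by nlinarith [hz1, hz0, hzsq]
        have hAB : A * B ≤ (2 * z ^ 2) ^ 2 := by
          rw [hA, hB]
          nlinarith [h1ab, hzsq, sq_nonneg ((j.1 : ℝ)), sq_nonneg ((j.2 : ℝ)),
            mul_nonneg (sq_nonneg ((j.1 : ℝ))) (sq_nonneg ((j.2 : ℝ))),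
            sq_nonneg ((j.1 : ℝ) * (j.2 : ℝ))]
        have hstep : (A * B) ^ (t / 2) ≤ 2 ^ t * z ^ (2 * t) := by
          calc (A * B) ^ (t / 2) ≤ ((2 * z ^ 2) ^ 2) ^ (t / 2) :=
              Real.rpow_le_rpow hABpos.le hAB (by linarith)
            _ = (2 * z ^ 2) ^ t := by
                rw [← Real.rpow_natCast (2 * z ^ 2) 2, ← Real.rpow_mul (by positivity)]
                norm_num
                congr 1
                ring
            _ = 2 ^ t * (z ^ 2) ^ t := Real.mul_rpow (by norm_num) (by positivity)
            _ = 2 ^ t * z ^ (2 * t) := by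
                rw [← Real.rpow_natCast z 2, ← Real.rpow_mul hz0.le]
                norm_num
        have hmain : z ^ (-(2 * t)) ≤ 2 ^ t * (A * B) ^ (-(t / 2)) := by
          rw [Real.rpow_neg hz0.le, Real.rpow_neg hABpos.le]
          have hz2t : 0 < z ^ (2 * t) := Real.rpow_pos_of_pos hz0 _
          have hABt : 0 < (A * B) ^ (t / 2) := Real.rpow_pos_of_pos hABpos _
          have h2t : (0 : ℝ) < 2 ^ t := by positivity
          calc (z ^ (2 * t))⁻¹ ≤ ((A * B) ^ (t / 2) / 2 ^ t)⁻¹ := by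
                apply inv_anti₀ (by positivity)
                rw [div_le_iff₀ h2t]
                nlinarith [hstep]
            _ = 2 ^ t * ((A * B) ^ (t / 2))⁻¹ := by rw [inv_div, div_eq_mul_inv]
        have hgprod : (A * B) ^ (-(t / 2)) = g j.1 * g j.2 := by
          rw [hg]
          exact Real.mul_rpow (by positivity) (by positivity)
        have hsq : (z ^ (-t)) ^ 2 = z ^ (-(2 * t)) := by
          rw [← rpow_two_eq hz0.le (-t)]
          ring_nf
        calc (ENNReal.ofReal (z ^ (-t))) ^ 2 = ENNReal.ofReal ((z ^ (-t)) ^ 2) := by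
              rw [ENNReal.ofReal_pow (Real.rpow_nonneg hz0.le _)]
          _ = ENNReal.ofReal (z ^ (-(2 * t))) := by rw [hsq]
          _ ≤ ENNReal.ofReal (2 ^ t * (g j.1 * g j.2)) := by
              apply ENNReal.ofReal_le_ofReal
              rw [← hgprod]; exact hmain
          _ = ENNReal.ofReal (2 ^ t) * (ENNReal.ofReal (g j.1) * ENNReal.ofReal (g j.2)) := by
              rw [ENNReal.ofReal_mul (by positivity), ENNReal.ofReal_mul (hg_nonneg j.1)]
    calc (∑' j : ℤ × ℤ, (if j = 0 then 0 else ENNReal.ofReal (znorm j ^ (-t))) ^ 2)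
        ≤ ∑' j : ℤ × ℤ, ENNReal.ofReal (2 ^ t) *
            (ENNReal.ofReal (g j.1) * ENNReal.ofReal (g j.2)) := ENNReal.tsum_le_tsum hterm
      _ = ENNReal.ofReal (2 ^ t) *
            ∑' j : ℤ × ℤ, ENNReal.ofReal (g j.1) * ENNReal.ofReal (g j.2) :=
          ENNReal.tsum_mul_left
      _ = ENNReal.ofReal (2 ^ t) * (Sg * Sg) := by
          congr 1
          rw [ENNReal.tsum_prod']
          calc ∑' (a : ℤ) (b : ℤ), ENNReal.ofReal (g a) * ENNReal.ofReal (g b)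
              = ∑' a : ℤ, ENNReal.ofReal (g a) * Sg := by
                apply tsum_congr; intro a; exact ENNReal.tsum_mul_left
            _ = Sg * Sg := ENNReal.tsum_mul_right
  exact ne_top_of_le_ne_top
    (ENNReal.mul_ne_top ENNReal.ofReal_ne_top (ENNReal.mul_ne_top hSg_ne_top hSg_ne_top)) hbound

lemma gnorm_zero_eq (s ρ : ℝ) (f : ℤ × ℤ → ℂ) :
    gnorm s ρ 0 f = (∑' j : ℤ × ℤ,
      (if j = 0 then 0 else ENNReal.ofReal (znorm j ^ ρ) * ENNReal.ofReal ‖f j‖) ^ 2) ^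
        (1 / 2 : ℝ) := by
  unfold gnorm
  congr 1
  apply tsum_congr; intro j
  by_cases hj : j = 0
  · simp [hj]
  · rw [if_neg hj, if_neg hj]
    have h2 : (znorm j ^ ρ * ‖f j‖) ^ 2 =
        znorm j ^ (2 * ρ) * Real.exp (2 * 0 * znorm j ^ s) * ‖f j‖ ^ 2 := by
      have h0 : (2 : ℝ) * 0 * znorm j ^ s = 0 := by ring
      rw [h0, Real.exp_zero, mul_one, mul_pow, rpow_two_eq (znorm_nonneg j)]
    conv_rhs => rw [← ENNReal.ofReal_mul (Real.rpow_nonneg (znorm_nonneg j) ρ),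
      ← ENNReal.ofReal_pow (mul_nonneg (Real.rpow_nonneg (znorm_nonneg j) ρ) (norm_nonneg _)), h2]

/-- **Product estimate** -/
theorem riesz_product_estimate
    (s σ : ℝ) (hs : s ∈ Set.Ioc (1/2 : ℝ) 1) (hσ : σ ∈ Set.Ioo (1/s) 2) :
    ∃ C : ℝ, 0 < C ∧
      ∀ f : ℤ × ℤ → ℂ, f 0 = 0 →
        (∑' k : ℤ × ℤ, if k = 0 then 0 else
            ENNReal.ofReal (znorm k ^ (2 * (σ - 1) * s) *
              ‖∑' j : ℤ × ℤ, if j = 0 ∨ j = k then 0 else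
                ((perpDot j k / znorm j : ℝ) : ℂ) * f j * f (k - j)‖ ^ 2)) ^ (1/2 : ℝ) ≤
          ENNReal.ofReal C * gnorm s (σ * s) 0 f * gnorm s ((σ + 1) * s) 0 f := by
  obtain ⟨hs05, hs1⟩ := hs
  obtain ⟨hσl, hσ2⟩ := hσ
  have hs0 : (0 : ℝ) < s := by linarith
  have hσ1 : 1 < σ := by
    have h : (1 : ℝ) ≤ 1 / s := by rw [le_div_iff₀ hs0]; linarith
    linarith
  have ht1 : 1 < σ * s := by
    have := (div_lt_iff₀ hs0).mp hσl
    linarith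
  set ρ : ℝ := (σ - 1) * s + 1 with hρdef
  have hρ0 : 0 ≤ ρ := by nlinarith
  have hρle : ρ ≤ (σ + 1) * s := by nlinarith
  set K : ℝ≥0∞ :=
    ∑' j : ℤ × ℤ, (if j = 0 then 0 else ENNReal.ofReal (znorm j ^ (-(σ * s)))) ^ 2 with hKdef
  have hK : K ≠ ⊤ := step_K ht1
  set E : ℝ≥0∞ := ENNReal.ofReal (2 ^ ρ) * 2 * K ^ (1 / 2 : ℝ) with hEdef
  have hE : E ≠ ⊤ :=
    ENNReal.mul_ne_top (ENNReal.mul_ne_top ENNReal.ofReal_ne_top (by norm_num))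
      (ENNReal.rpow_ne_top_of_nonneg (by norm_num) hK)
  have hE1 : E + 1 ≠ ⊤ := ENNReal.add_ne_top.mpr ⟨hE, ENNReal.one_ne_top⟩
  refine ⟨(E + 1).toReal, ENNReal.toReal_pos (by simp) hE1, ?_⟩
  have hD : ENNReal.ofReal (E + 1).toReal = E + 1 := ENNReal.ofReal_toReal hE1
  intro f hf0
  set N : ℤ × ℤ → ℝ≥0∞ := fun j => ENNReal.ofReal ‖f j‖ with hNdef
  have hN0 : N 0 = 0 := by simp [hNdef, hf0]
  set u1 : ℤ × ℤ → ℝ≥0∞ :=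
    fun j => if j = 0 then 0 else ENNReal.ofReal (znorm j ^ (σ * s)) * N j with hu1def
  set u2 : ℤ × ℤ → ℝ≥0∞ :=
    fun j => if j = 0 then 0 else ENNReal.ofReal (znorm j ^ ((σ + 1) * s)) * N j with hu2def
  set a : ℤ × ℤ → ℝ≥0∞ :=
    fun j => if j = 0 then 0 else ENNReal.ofReal (znorm j ^ ρ) * N j with hadef
  set c : ℤ × ℤ → ℝ≥0∞ := fun k => ∑' j : ℤ × ℤ, a j * N (k - j) with hcdef
  set T1 : ℝ≥0∞ := ∑' j : ℤ × ℤ, (u1 j) ^ 2 with hT1def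
  set T2 : ℝ≥0∞ := ∑' j : ℤ × ℤ, (u2 j) ^ 2 with hT2def
  set L1 : ℝ≥0∞ := ∑' j : ℤ × ℤ, N j with hL1def
  -- Step B
  have stepB : ∀ k : ℤ × ℤ, k ≠ 0 →
      ENNReal.ofReal (znorm k ^ ρ) * (∑' j : ℤ × ℤ, N j * N (k - j)) ≤
        ENNReal.ofReal (2 ^ ρ) * 2 * c k := by
    intro k hk
    rw [← ENNReal.tsum_mul_left]
    have hterm : ∀ j : ℤ × ℤ, ENNReal.ofReal (znorm k ^ ρ) * (N j * N (k - j)) ≤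
        ENNReal.ofReal (2 ^ ρ) * (a j * N (k - j) + N j * a (k - j)) := by
      intro j
      by_cases hj : j = 0
      · simp [hj, hN0]
      by_cases hkj : k - j = 0
      · simp [hkj, hN0]
      · have hreal : znorm k ^ ρ ≤ 2 ^ ρ * (znorm j ^ ρ + znorm (k - j) ^ ρ) := by
          calc znorm k ^ ρ ≤ (znorm j + znorm (k - j)) ^ ρ :=
              Real.rpow_le_rpow (znorm_nonneg k) (znorm_triangle j k) hρ0
            _ ≤ 2 ^ ρ * (znorm j ^ ρ + znorm (k - j) ^ ρ) :=
              rpow_add_le (znorm_nonneg j) (znorm_nonneg (k - j)) hρ0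
        calc ENNReal.ofReal (znorm k ^ ρ) * (N j * N (k - j))
            ≤ ENNReal.ofReal (2 ^ ρ * (znorm j ^ ρ + znorm (k - j) ^ ρ)) * (N j * N (k - j)) :=
              mul_le_mul_left (ENNReal.ofReal_le_ofReal hreal) _
          _ = (ENNReal.ofReal (2 ^ ρ) *
                (ENNReal.ofReal (znorm j ^ ρ) + ENNReal.ofReal (znorm (k - j) ^ ρ))) *
                (N j * N (k - j)) := by
              rw [ENNReal.ofReal_mul (by positivity),
                ENNReal.ofReal_add (Real.rpow_nonneg (znorm_nonneg j) ρ)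
                  (Real.rpow_nonneg (znorm_nonneg (k - j)) ρ)]
          _ = ENNReal.ofReal (2 ^ ρ) * (a j * N (k - j) + N j * a (k - j)) := by
              simp only [hadef, if_neg hj, if_neg hkj]
              ring
    calc ∑' j : ℤ × ℤ, ENNReal.ofReal (znorm k ^ ρ) * (N j * N (k - j))
        ≤ ∑' j : ℤ × ℤ, ENNReal.ofReal (2 ^ ρ) * (a j * N (k - j) + N j * a (k - j)) :=
          ENNReal.tsum_le_tsum hterm
      _ = ENNReal.ofReal (2 ^ ρ) *
            ((∑' j : ℤ × ℤ, a j * N (k - j)) + ∑' j : ℤ × ℤ, N j * a (k - j)) := by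
          rw [ENNReal.tsum_mul_left, ENNReal.tsum_add]
      _ = ENNReal.ofReal (2 ^ ρ) * (c k + c k) := by
          have h := (Equiv.subLeft k).tsum_eq (fun j : ℤ × ℤ => N j * a (k - j))
          simp only [Equiv.subLeft_apply, sub_sub_cancel] at h
          have h2 : ∑' j : ℤ × ℤ, N j * a (k - j) = c k := by
            rw [← h, hcdef]
            apply tsum_congr; intro j
            ring
          rw [h2, hcdef]
      _ = ENNReal.ofReal (2 ^ ρ) * 2 * c k := by ring
  -- Step A
  have stepA : ∀ k : ℤ × ℤ, k ≠ 0 →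
      ENNReal.ofReal (znorm k ^ (2 * (σ - 1) * s) *
        ‖∑' j : ℤ × ℤ, if j = 0 ∨ j = k then 0 else
          ((perpDot j k / znorm j : ℝ) : ℂ) * f j * f (k - j)‖ ^ 2) ≤
      (ENNReal.ofReal (2 ^ ρ) * 2) ^ 2 * (c k) ^ 2 := by
    intro k hk
    have hz0 : 0 < znorm k := znorm_pos hk
    have h1 : ENNReal.ofReal ‖∑' j : ℤ × ℤ, if j = 0 ∨ j = k then 0 else
        ((perpDot j k / znorm j : ℝ) : ℂ) * f j * f (k - j)‖ ≤
        ENNReal.ofReal (znorm k) * ∑' j : ℤ × ℤ, N j * N (k - j) := by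
      calc ENNReal.ofReal ‖∑' j : ℤ × ℤ, if j = 0 ∨ j = k then 0 else
            ((perpDot j k / znorm j : ℝ) : ℂ) * f j * f (k - j)‖
          ≤ ∑' j : ℤ × ℤ, ENNReal.ofReal ‖if j = 0 ∨ j = k then 0 else
              ((perpDot j k / znorm j : ℝ) : ℂ) * f j * f (k - j)‖ := ofReal_norm_tsum_le _
        _ ≤ ∑' j : ℤ × ℤ, ENNReal.ofReal (znorm k) * (N j * N (k - j)) := by
            apply ENNReal.tsum_le_tsum
            intro j
            by_cases hj : j = 0 ∨ j = k
            · rw [if_pos hj]; simp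
            · push_neg at hj
              rw [if_neg (by tauto)]
              have hpd : |perpDot j k / znorm j| ≤ znorm k := by
                rw [abs_div, abs_of_nonneg (znorm_nonneg j), div_le_iff₀ (znorm_pos hj.1)]
                calc |perpDot j k| ≤ znorm j * znorm k := perpDot_le j k
                  _ = znorm k * znorm j := mul_comm _ _
              calc ENNReal.ofReal ‖((perpDot j k / znorm j : ℝ) : ℂ) * f j * f (k - j)‖
                  = ENNReal.ofReal (|perpDot j k / znorm j| * ‖f j‖ * ‖f (k - j)‖) := by
                    rw [norm_mul, norm_mul, Complex.norm_real, Real.norm_eq_abs]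
                _ = ENNReal.ofReal |perpDot j k / znorm j| * N j * N (k - j) := by
                    rw [ENNReal.ofReal_mul (by positivity), ENNReal.ofReal_mul (abs_nonneg _)]
                _ ≤ ENNReal.ofReal (znorm k) * N j * N (k - j) := by
                    apply mul_le_mul_left
                    apply mul_le_mul_left
                    exact ENNReal.ofReal_le_ofReal hpd
                _ = ENNReal.ofReal (znorm k) * (N j * N (k - j)) := mul_assoc _ _ _
        _ = ENNReal.ofReal (znorm k) * ∑' j : ℤ × ℤ, N j * N (k - j) := ENNReal.tsum_mul_left
    have h2 : ENNReal.ofReal (znorm k ^ (2 * (σ - 1) * s) *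
        ‖∑' j : ℤ × ℤ, if j = 0 ∨ j = k then 0 else
          ((perpDot j k / znorm j : ℝ) : ℂ) * f j * f (k - j)‖ ^ 2) =
        (ENNReal.ofReal (znorm k ^ ((σ - 1) * s)) *
          ENNReal.ofReal ‖∑' j : ℤ × ℤ, if j = 0 ∨ j = k then 0 else
            ((perpDot j k / znorm j : ℝ) : ℂ) * f j * f (k - j)‖) ^ 2 := by
      rw [← ENNReal.ofReal_mul (Real.rpow_nonneg (znorm_nonneg k) _),
        ← ENNReal.ofReal_pow (by positivity)]
      congr 1
      rw [mul_pow, ← rpow_two_eq (znorm_nonneg k) ((σ - 1) * s)]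
      rw [show 2 * ((σ - 1) * s) = 2 * (σ - 1) * s by ring]
    rw [h2]
    calc (ENNReal.ofReal (znorm k ^ ((σ - 1) * s)) *
          ENNReal.ofReal ‖∑' j : ℤ × ℤ, if j = 0 ∨ j = k then 0 else
            ((perpDot j k / znorm j : ℝ) : ℂ) * f j * f (k - j)‖) ^ 2
        ≤ (ENNReal.ofReal (znorm k ^ ((σ - 1) * s)) *
            (ENNReal.ofReal (znorm k) * ∑' j : ℤ × ℤ, N j * N (k - j))) ^ 2 :=
          enn_sq_le_sq (mul_le_mul_right h1 _)
      _ = (ENNReal.ofReal (znorm k ^ ρ) * ∑' j : ℤ × ℤ, N j * N (k - j)) ^ 2 := by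
          rw [← mul_assoc, ← ENNReal.ofReal_mul (Real.rpow_nonneg (znorm_nonneg k) _)]
          have hzz : znorm k ^ ((σ - 1) * s) * znorm k = znorm k ^ ρ := by
            rw [hρdef, Real.rpow_add hz0, Real.rpow_one]
          rw [hzz]
      _ ≤ (ENNReal.ofReal (2 ^ ρ) * 2 * c k) ^ 2 := enn_sq_le_sq (stepB k hk)
      _ = (ENNReal.ofReal (2 ^ ρ) * 2) ^ 2 * (c k) ^ 2 := by rw [mul_pow]
  -- the ℓ¹ bound on N
  have hL1le : L1 ≤ K ^ (1 / 2 : ℝ) * T1 ^ (1 / 2 : ℝ) := by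
    set x : ℤ × ℤ → ℝ≥0∞ :=
      fun j => if j = 0 then 0 else ENNReal.ofReal (znorm j ^ (-(σ * s))) with hxdef
    have hL1eq : L1 = ∑' j : ℤ × ℤ, x j * u1 j := by
      rw [hL1def]
      apply tsum_congr; intro j
      by_cases hj : j = 0
      · simp [hj, hxdef, hu1def, hN0]
      · simp only [hxdef, hu1def, if_neg hj]
        rw [← mul_assoc, ← ENNReal.ofReal_mul (Real.rpow_nonneg (znorm_nonneg j) _),
          ← Real.rpow_add (znorm_pos hj), neg_add_cancel, Real.rpow_zero,
          ENNReal.ofReal_one, one_mul]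
    rw [hL1eq]
    exact ennreal_cauchy_schwarz x u1
  have hA2le : (∑' j : ℤ × ℤ, (a j) ^ 2) ≤ T2 := by
    rw [hT2def]
    apply ENNReal.tsum_le_tsum
    intro j
    by_cases hj : j = 0
    · simp [hadef, hu2def, hj]
    · apply enn_sq_le_sq
      simp only [hadef, hu2def, if_neg hj]
      apply mul_le_mul_left
      exact ENNReal.ofReal_le_ofReal
        (Real.rpow_le_rpow_of_exponent_le (one_le_znorm hj) hρle)
  -- main bound on the full sum
  have hTot : (∑' k : ℤ × ℤ, if k = 0 then 0 else
      ENNReal.ofReal (znorm k ^ (2 * (σ - 1) * s) *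
        ‖∑' j : ℤ × ℤ, if j = 0 ∨ j = k then 0 else
          ((perpDot j k / znorm j : ℝ) : ℂ) * f j * f (k - j)‖ ^ 2)) ≤
      (ENNReal.ofReal (E + 1).toReal) ^ 2 * (T1 * T2) := by
    calc (∑' k : ℤ × ℤ, if k = 0 then 0 else
        ENNReal.ofReal (znorm k ^ (2 * (σ - 1) * s) *
          ‖∑' j : ℤ × ℤ, if j = 0 ∨ j = k then 0 else
            ((perpDot j k / znorm j : ℝ) : ℂ) * f j * f (k - j)‖ ^ 2))
        ≤ ∑' k : ℤ × ℤ, (ENNReal.ofReal (2 ^ ρ) * 2) ^ 2 * (c k) ^ 2 := by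
          apply ENNReal.tsum_le_tsum
          intro k
          by_cases hk : k = 0
          · simp [hk]
          · rw [if_neg hk]
            exact stepA k hk
      _ = (ENNReal.ofReal (2 ^ ρ) * 2) ^ 2 * ∑' k : ℤ × ℤ, (c k) ^ 2 := ENNReal.tsum_mul_left
      _ ≤ (ENNReal.ofReal (2 ^ ρ) * 2) ^ 2 * (L1 ^ 2 * ∑' j : ℤ × ℤ, (a j) ^ 2) := by
          apply mul_le_mul_right
          simpa [hcdef, hL1def] using conv_l2 a N
      _ ≤ (ENNReal.ofReal (2 ^ ρ) * 2) ^ 2 * ((K ^ (1 / 2 : ℝ) * T1 ^ (1 / 2 : ℝ)) ^ 2 * T2) := by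
          apply mul_le_mul_right
          exact mul_le_mul' (enn_sq_le_sq hL1le) hA2le
      _ = E ^ 2 * (T1 * T2) := by
          rw [hEdef, mul_pow, mul_pow, mul_pow, enn_sq_half, enn_sq_half]
          ring
      _ ≤ (ENNReal.ofReal (E + 1).toReal) ^ 2 * (T1 * T2) := by
          apply mul_le_mul_left
          apply enn_sq_le_sq
          rw [hD]
          exact le_self_add
  rw [gnorm_zero_eq s (σ * s) f, gnorm_zero_eq s ((σ + 1) * s) f]
  calc (∑' k : ℤ × ℤ, if k = 0 then 0 else
      ENNReal.ofReal (znorm k ^ (2 * (σ - 1) * s) *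
        ‖∑' j : ℤ × ℤ, if j = 0 ∨ j = k then 0 else
          ((perpDot j k / znorm j : ℝ) : ℂ) * f j * f (k - j)‖ ^ 2)) ^ (1/2 : ℝ)
      ≤ ((ENNReal.ofReal (E + 1).toReal) ^ 2 * (T1 * T2)) ^ (1/2 : ℝ) :=
        ENNReal.rpow_le_rpow hTot (by norm_num)
    _ = ENNReal.ofReal (E + 1).toReal * (T1 ^ (1/2 : ℝ) * T2 ^ (1/2 : ℝ)) := by
        rw [ENNReal.mul_rpow_of_nonneg _ _ (by norm_num),
          ENNReal.mul_rpow_of_nonneg _ _ (by norm_num), enn_half_sq]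
    _ = ENNReal.ofReal (E + 1).toReal * T1 ^ (1/2 : ℝ) * T2 ^ (1/2 : ℝ) := by
        rw [mul_assoc]
    _ = ENNReal.ofReal (E + 1).toReal *
          (∑' j : ℤ × ℤ, (if j = 0 then 0 else
            ENNReal.ofReal (znorm j ^ (σ * s)) * ENNReal.ofReal ‖f j‖) ^ 2) ^ (1/2 : ℝ) *
          (∑' j : ℤ × ℤ, (if j = 0 then 0 else
            ENNReal.ofReal (znorm j ^ ((σ + 1) * s)) * ENNReal.ofReal ‖f j‖) ^ 2) ^ (1/2 : ℝ) := by
        rw [hT1def, hT2def, hu1def, hu2def, hNdef]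

end
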